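/- Let a, b be real numbers with b ≥ 0, a − b ≥ 1, and (a,b) ≠ (1,0). Then the supremum over complex γ with |γ| < 1 of (1 − |γ|²)/(a² − |b − γ|²) equals the supremum over real γ ∈ (−1,1) of (1 − γ²)/(a² − (b − γ)²). (Note that a² − |b − γ|² > 0 whenever |γ| < 1 under these hypotheses.) -/

import Mathlib

/-- for `b ≥ 0`, `a - b ≥ 1`, `(a,b) ≠ (1,0)`, the supremum of
`(1 - |γ|²)/(a² - |b - γ|²)` over complex `γ` in the open unit disc equals the
supremum of `(1 - γ²)/(a² - (b - γ)²)` over real `γ ∈ (-1,1)`; moreover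
`a² - |b - γ|² > 0` whenever `|γ| < 1`. -/
theorem sup_disc_eq_sup_interval
    (a b : ℝ) (hb : 0 ≤ b) (hab : 1 ≤ a - b) (hne : (a, b) ≠ (1, 0)) :
    (∀ γ : ℂ, ‖γ‖ < 1 → 0 < a ^ 2 - ‖(b : ℂ) - γ‖ ^ 2) ∧
    sSup {x : ℝ | ∃ γ : ℂ, ‖γ‖ < 1 ∧
        x = (1 - ‖γ‖ ^ 2) / (a ^ 2 - ‖(b : ℂ) - γ‖ ^ 2)} =
      sSup {x : ℝ | ∃ γ : ℝ, γ ∈ Set.Ioo (-1 : ℝ) 1 ∧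
        x = (1 - γ ^ 2) / (a ^ 2 - (b - γ) ^ 2)} := by
  have key : ∀ r : ℝ, -1 < r → r < 1 → 0 < a ^ 2 - (b - r) ^ 2 := by
    intro r h1 h2; nlinarith
  have keyle : ∀ r : ℝ, -1 < r → r < 1 → (1 - r ^ 2) / (a ^ 2 - (b - r) ^ 2) ≤ 1 := by
    intro r h1 h2
    rw [div_le_one (key r h1 h2)]
    nlinarith [mul_nonneg (mul_nonneg hb hb) (sq_nonneg r), mul_nonneg hb (sq_nonneg r)]
  -- abs squared formulas
  have e1 : ∀ γ : ℂ, ‖γ‖ ^ 2 = γ.re ^ 2 + γ.im ^ 2 := by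
    intro γ; rw [Complex.sq_norm, Complex.normSq_apply]; ring
  have e2 : ∀ γ : ℂ, ‖(b : ℂ) - γ‖ ^ 2 = (b - γ.re) ^ 2 + γ.im ^ 2 := by
    intro γ; rw [Complex.sq_norm, Complex.normSq_apply]; simp; ring
  have cpos : ∀ γ : ℂ, ‖γ‖ < 1 → 0 < a ^ 2 - ‖(b : ℂ) - γ‖ ^ 2 := by
    intro γ hγ
    have h2 : ‖γ‖ ^ 2 < 1 := by
      nlinarith [norm_nonneg γ]
    rw [e1] at h2
    rw [e2]
    nlinarith [sq_nonneg γ.im, sq_nonneg (γ.re + 1), mul_nonneg hb (by nlinarith [sq_nonneg γ.im] : (0:ℝ) ≤ 1 + γ.re)]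
  refine ⟨cpos, ?_⟩
  have hre : ∀ γ : ℂ, ‖γ‖ < 1 → |γ.re| < 1 := by
    intro γ hγ; exact lt_of_le_of_lt (Complex.abs_re_le_norm γ) hγ
  -- complex value ≤ real value at real part
  have cle : ∀ γ : ℂ, ‖γ‖ < 1 →
      (1 - ‖γ‖ ^ 2) / (a ^ 2 - ‖(b : ℂ) - γ‖ ^ 2) ≤
      (1 - γ.re ^ 2) / (a ^ 2 - (b - γ.re) ^ 2) := by
    intro γ hγ
    have hx := hre γ hγ
    have hx1 : -1 < γ.re := by cases abs_lt.mp hx; assumption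
    have hx2 : γ.re < 1 := (abs_lt.mp hx).2
    have p1 := cpos γ hγ
    have p2 := key γ.re hx1 hx2
    have hD : 1 - γ.re ^ 2 ≤ a ^ 2 - (b - γ.re) ^ 2 := by
      have := keyle γ.re hx1 hx2
      rw [div_le_one p2] at this; exact this
    have p1' : 0 < a ^ 2 - ((b - γ.re) ^ 2 + γ.im ^ 2) := by rw [← e2]; exact p1
    rw [e1 γ, e2 γ, div_le_div_iff₀ p1' p2]
    nlinarith [sq_nonneg γ.im, mul_nonneg (sq_nonneg γ.im) (by linarith : (0:ℝ) ≤ a ^ 2 - (b - γ.re) ^ 2 - (1 - γ.re ^ 2))]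
  set Sc := {x : ℝ | ∃ γ : ℂ, ‖γ‖ < 1 ∧
      x = (1 - ‖γ‖ ^ 2) / (a ^ 2 - ‖(b : ℂ) - γ‖ ^ 2)} with hSc
  set Sr := {x : ℝ | ∃ γ : ℝ, γ ∈ Set.Ioo (-1 : ℝ) 1 ∧
      x = (1 - γ ^ 2) / (a ^ 2 - (b - γ) ^ 2)} with hSr
  have hsub : Sr ⊆ Sc := by
    rintro x ⟨r, hr, rfl⟩
    refine ⟨(r : ℂ), ?_, ?_⟩
    · rw [Complex.norm_real, Real.norm_eq_abs]; exact abs_lt.mpr ⟨hr.1, hr.2⟩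
    · rw [← Complex.ofReal_sub, Complex.sq_norm, Complex.normSq_apply, Complex.sq_norm,
        Complex.normSq_apply]
      simp [pow_two]
  have hnr : Sr.Nonempty := ⟨_, 0, ⟨by norm_num, by norm_num⟩, rfl⟩
  have hnc : Sc.Nonempty := hnr.mono hsub
  have hbr : BddAbove Sr := by
    refine ⟨1, ?_⟩
    rintro x ⟨r, hr, rfl⟩
    exact keyle r hr.1 hr.2
  have hbc : BddAbove Sc := by
    refine ⟨1, ?_⟩
    rintro x ⟨γ, hγ, rfl⟩
    have hx := hre γ hγ
    have hx1 : -1 < γ.re := (abs_lt.mp hx).1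
    have hx2 : γ.re < 1 := (abs_lt.mp hx).2
    exact le_trans (cle γ hγ) (keyle γ.re hx1 hx2)
  refine le_antisymm ?_ (csSup_le_csSup hbc hnr hsub)
  refine csSup_le hnc ?_
  rintro x ⟨γ, hγ, rfl⟩
  have hx := hre γ hγ
  have hx1 : -1 < γ.re := (abs_lt.mp hx).1
  have hx2 : γ.re < 1 := (abs_lt.mp hx).2
  exact le_trans (cle γ hγ) (le_csSup hbr ⟨γ.re, ⟨hx1, hx2⟩, rfl⟩)
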